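/- Let X and Y be complex Banach spaces, A ∈ B(X), B ∈ B(Y), C ∈ B(Y, X), and let M_C ∈ B(X ⊕ Y) be the upper-triangular operator matrix M_C(x, y) = (Ax + Cy, By). Then σ_su(B) ⊆ σ_su(M_C) ⊆ σ_su(A) ∪ σ_su(B); moreover the set W_{σ_su}(A,B,C) := (σ_su(A) ∪ σ_su(B)) \ σ_su(M_C) satisfies W_{σ_su}(A,B,C) ⊆ (σ_su(A) ∩ σ_a(B)) \ σ_su(B) and W_{σ_su}(A,B,C) ⊆ η(σ_su(B)), where σ_su is the defect (surjectivity) spectrum, σ_a the approximate point spectrum and η the polynomially convex hull. -/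

import Mathlib

noncomputable section

open ContinuousLinearMap Metric Set

variable {E : Type*} [NormedAddCommGroup E] [NormedSpace ℂ E]
variable {X Y : Type*} [NormedAddCommGroup X] [NormedSpace ℂ X] [CompleteSpace X]
  [NormedAddCommGroup Y] [NormedSpace ℂ Y] [CompleteSpace Y]

/-- The defect (surjectivity) spectrum: points where `T - z` is not surjective. -/
def surjSpectrum (T : E →L[ℂ] E) : Set ℂ :=
  {z | ¬ Function.Surjective ⇑(T - z • (1 : E →L[ℂ] E))}

/-- The approximate point spectrum: points where `T - z` is not bounded below
(injective with closed range). -/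
def apSpectrum (T : E →L[ℂ] E) : Set ℂ :=
  {z | ¬ (Function.Injective ⇑(T - z • (1 : E →L[ℂ] E)) ∧
      IsClosed (LinearMap.range ((T - z • (1 : E →L[ℂ] E)) : E →ₗ[ℂ] E) : Set E))}

/-- The polynomially convex hull of a set `M ⊆ ℂ`. -/
def polyHull (M : Set ℂ) : Set ℂ :=
  {w | ∀ p : Polynomial ℂ, ∀ m : ℝ, (∀ z ∈ M, ‖p.eval z‖ ≤ m) → ‖p.eval w‖ ≤ m}

/-- The upper-triangular operator matrix `M_C (x, y) = (A x + C y, B y)` on `X ⊕ Y`. -/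
def ucMat (A : X →L[ℂ] X) (B : Y →L[ℂ] Y) (C : Y →L[ℂ] X) :
    (X × Y) →L[ℂ] (X × Y) :=
  (A.comp (ContinuousLinearMap.fst ℂ X Y) + C.comp (ContinuousLinearMap.snd ℂ X Y)).prod
    (B.comp (ContinuousLinearMap.snd ℂ X Y))

section Helpers

open Filter

/-- Quantitative stability of surjectivity under small perturbations. -/
lemma myPerturb (f g : Y →L[ℂ] Y) {C : ℝ} (hC : 0 < C)
    (hb : ∀ y, ∃ x, f x = y ∧ ‖x‖ ≤ C * ‖y‖) (hfg : ‖g - f‖ ≤ 1 / (2 * C)) :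
    ∀ y : Y, ∃ x, g x = y ∧ ‖x‖ ≤ 2 * C * ‖y‖ := by
  choose φ hφ hφn using hb
  intro y
  set v : ℕ → Y := fun n => (fun w => w - g (φ w))^[n] y with hvdef
  have hv0 : v 0 = y := rfl
  have hvs : ∀ n, v (n + 1) = v n - g (φ (v n)) := fun n =>
    Function.iterate_succ_apply' _ n y
  have hdiff : ∀ n, v (n + 1) = (f - g) (φ (v n)) := by
    intro n
    rw [hvs]
    simp [hφ (v n)]
  have hhalf : ∀ n, ‖v (n + 1)‖ ≤ (1 / 2) * ‖v n‖ := by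
    intro n
    rw [hdiff]
    calc ‖(f - g) (φ (v n))‖ ≤ ‖f - g‖ * ‖φ (v n)‖ := le_opNorm _ _
      _ ≤ (1 / (2 * C)) * (C * ‖v n‖) := by
          apply mul_le_mul ?_ (hφn _) (norm_nonneg _) (by positivity)
          rwa [norm_sub_rev]
      _ = (1 / 2) * ‖v n‖ := by field_simp
  have hgeo : ∀ n, ‖v n‖ ≤ (1 / 2) ^ n * ‖y‖ := by
    intro n
    induction n with
    | zero => simp [hv0]
    | succ n ih =>
        calc ‖v (n + 1)‖ ≤ (1 / 2) * ‖v n‖ := hhalf n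
          _ ≤ (1 / 2) * ((1 / 2) ^ n * ‖y‖) := by nlinarith
          _ = (1 / 2) ^ (n + 1) * ‖y‖ := by ring
  have hub : ∀ n, ‖φ (v n)‖ ≤ (C * ‖y‖) * (1 / 2) ^ n := by
    intro n
    calc ‖φ (v n)‖ ≤ C * ‖v n‖ := hφn _
      _ ≤ C * ((1 / 2) ^ n * ‖y‖) := by
          have := hgeo n
          nlinarith
      _ = (C * ‖y‖) * (1 / 2) ^ n := by ring
  have hgs : HasSum (fun n : ℕ => (C * ‖y‖) * (1 / 2) ^ n) ((C * ‖y‖) * 2) := by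
    have h2' : ((1:ℝ) - 1/2)⁻¹ = 2 := by norm_num
    have := (hasSum_geometric_of_lt_one (by norm_num : (0:ℝ) ≤ 1/2) (by norm_num)).mul_left
      (C * ‖y‖)
    rwa [h2'] at this
  have hsum : Summable (fun n => φ (v n)) :=
    Summable.of_norm_bounded hgs.summable hub
  obtain ⟨x, hx⟩ := hsum
  have h3 : ∀ n, ∑ i ∈ Finset.range n, g (φ (v i)) = y - v n := by
    intro n
    have he : ∀ i, g (φ (v i)) = v i - v (i + 1) := by
      intro i; rw [hvs]; abel
    rw [Finset.sum_congr rfl fun i _ => he i, Finset.sum_range_sub' v n, hv0]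
  refine ⟨x, ?_, ?_⟩
  · have h1 : HasSum (fun n => g (φ (v n))) (g x) := hx.mapL g
    have h2 := h1.tendsto_sum_nat
    have h4 : Tendsto v atTop (nhds (0 : Y)) := by
      apply squeeze_zero_norm hgeo
      have := (tendsto_pow_atTop_nhds_zero_of_lt_one (by norm_num : (0:ℝ) ≤ 1/2)
        (by norm_num)).mul_const ‖y‖
      simpa using this
    have h5 : Tendsto (fun n => y - v n) atTop (nhds y) := by
      simpa using tendsto_const_nhds.sub h4
    simp only [h3] at h2
    exact tendsto_nhds_unique h2 h5
  · have h6 : ‖x‖ ≤ (C * ‖y‖) * 2 := by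
      rw [← hx.tsum_eq]
      exact tsum_of_norm_bounded hgs hub
    linarith

lemma myFrontier (B : Y →L[ℂ] Y) {z : ℂ} (hz : z ∈ frontier (spectrum ℂ B)) :
    ¬ Function.Surjective ⇑(B - z • (1 : Y →L[ℂ] Y)) := by
  intro hsurj
  have hzmem : z ∈ spectrum ℂ B := (spectrum.isClosed (𝕜 := ℂ) B).frontier_subset hz
  obtain ⟨C, hCpos, hC⟩ := exists_preimage_norm_le (B - z • 1) hsurj
  have hz2 : z ∈ closure (spectrum ℂ B)ᶜ := by
    have h := hz
    rw [frontier_eq_closure_inter_closure] at h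
    exact h.2
  obtain ⟨z', hz'mem, hdist⟩ := Metric.mem_closure_iff.mp hz2 (1 / (2 * C)) (by positivity)
  have hunit : IsUnit ((z' • 1 : Y →L[ℂ] Y) - B) := by
    have := spectrum.notMem_iff.mp hz'mem
    rwa [Algebra.algebraMap_eq_smul_one] at this
  have hunit2 : IsUnit (B - z' • (1 : Y →L[ℂ] Y)) := by
    have := hunit.neg; rwa [neg_sub] at this
  obtain ⟨u, hu⟩ := hunit2
  have hgf : ‖(B - z' • (1 : Y →L[ℂ] Y)) - (B - z • 1)‖ ≤ 1 / (2 * C) := by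
    have he : (B - z' • (1 : Y →L[ℂ] Y)) - (B - z • 1) = (z - z') • (1 : Y →L[ℂ] Y) := by
      rw [sub_smul]; abel
    rw [he]
    calc ‖(z - z') • (1 : Y →L[ℂ] Y)‖ ≤ ‖z - z'‖ :=
          opNorm_le_bound _ (norm_nonneg _) fun w => by simp [norm_smul]
      _ ≤ 1 / (2 * C) := by
          have : dist z z' < 1 / (2 * C) := hdist
          rw [dist_eq_norm] at this
          linarith
  have hb2 := myPerturb (B - z • 1) (B - z' • 1) hCpos hC hgf
  have hbij := ContinuousLinearMap.isUnit_iff_bijective.mp ⟨u, hu⟩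
  have hmul : ∀ w, (B - z' • (1 : Y →L[ℂ] Y)) ((↑u⁻¹ : Y →L[ℂ] Y) w) = w := by
    intro w
    have h1 : ((↑u : Y →L[ℂ] Y) * (↑u⁻¹ : Y →L[ℂ] Y)) w = (1 : Y →L[ℂ] Y) w := by
      rw [u.mul_inv]
    rw [hu] at h1
    simpa using h1
  have hinvb : ∀ w, ‖(↑u⁻¹ : Y →L[ℂ] Y) w‖ ≤ 2 * C * ‖w‖ := by
    intro w
    obtain ⟨x, hx1, hx2⟩ := hb2 w
    have hxeq : (↑u⁻¹ : Y →L[ℂ] Y) w = x := hbij.injective ((hmul w).trans hx1.symm)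
    rw [hxeq]; exact hx2
  have hnorm : ‖(↑u⁻¹ : Y →L[ℂ] Y)‖ ≤ 2 * C := opNorm_le_bound _ (by positivity) hinvb
  have hfinal : IsUnit (B - z • (1 : Y →L[ℂ] Y)) := by
    by_cases h0 : ‖(↑u⁻¹ : Y →L[ℂ] Y)‖ = 0
    · have hz0 : (↑u⁻¹ : Y →L[ℂ] Y) = 0 := norm_eq_zero.mp h0
      have h1 : (1 : Y →L[ℂ] Y) = 0 := by
        have := u.inv_mul
        rw [hz0] at this
        simpa using this.symm
      haveI : Subsingleton (Y →L[ℂ] Y) := subsingleton_of_zero_eq_one h1.symm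
      exact isUnit_of_subsingleton _
    · have hpos : 0 < ‖(↑u⁻¹ : Y →L[ℂ] Y)‖ := lt_of_le_of_ne (norm_nonneg _) (Ne.symm h0)
      have ht : ‖((z' - z) • (1 : Y →L[ℂ] Y))‖ < ‖(↑u⁻¹ : Y →L[ℂ] Y)‖⁻¹ := by
        have h1 : ‖((z' - z) • (1 : Y →L[ℂ] Y))‖ ≤ ‖z' - z‖ :=
          opNorm_le_bound _ (norm_nonneg _) fun w => by simp [norm_smul]
        have h2 : ‖z' - z‖ < 1 / (2 * C) := by
          rw [← dist_eq_norm, dist_comm]; exact hdist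
        have h3 : 1 / (2 * C) ≤ ‖(↑u⁻¹ : Y →L[ℂ] Y)‖⁻¹ := by
          rw [one_div]
          exact inv_anti₀ hpos hnorm
        linarith
      have hval : ((u.add ((z' - z) • (1 : Y →L[ℂ] Y)) ht : (Y →L[ℂ] Y)ˣ) : Y →L[ℂ] Y)
          = B - z • 1 := by
        rw [u.val_add _ ht, hu, sub_smul]
        abel
      exact hval ▸ (u.add ((z' - z) • (1 : Y →L[ℂ] Y)) ht).isUnit
  have : IsUnit ((z • 1 : Y →L[ℂ] Y) - B) := by
    have := hfinal.neg; rwa [neg_sub] at this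
  exact spectrum.notMem_iff.mpr (by rwa [Algebra.algebraMap_eq_smul_one]) hzmem

lemma myHull (B : Y →L[ℂ] Y) {w : ℂ} (hw : w ∈ spectrum ℂ B)
    (p : Polynomial ℂ) (m : ℝ)
    (hm : ∀ ζ ∈ frontier (spectrum ℂ B), ‖p.eval ζ‖ ≤ m) : ‖p.eval w‖ ≤ m :=
  Complex.norm_le_of_forall_mem_frontier_norm_le (spectrum.isBounded B)
    p.differentiable.diffContOnCl hm (subset_closure hw)

lemma ucMat_sub_apply (A : X →L[ℂ] X) (B : Y →L[ℂ] Y) (C : Y →L[ℂ] X) (z : ℂ) (x : X) (y : Y) :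
    (ucMat A B C - z • (1 : (X × Y) →L[ℂ] (X × Y))) (x, y)
      = (A x + C y - z • x, B y - z • y) := by
  simp [ucMat, Prod.smul_mk, Prod.mk_sub_mk]

end Helpers

theorem stmt19 (A : X →L[ℂ] X) (B : Y →L[ℂ] Y) (C : Y →L[ℂ] X) :
    surjSpectrum B ⊆ surjSpectrum (ucMat A B C) ∧
      surjSpectrum (ucMat A B C) ⊆ surjSpectrum A ∪ surjSpectrum B ∧
      (surjSpectrum A ∪ surjSpectrum B) \ surjSpectrum (ucMat A B C) ⊆
        (surjSpectrum A ∩ apSpectrum B) \ surjSpectrum B ∧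
      (surjSpectrum A ∪ surjSpectrum B) \ surjSpectrum (ucMat A B C) ⊆
        polyHull (surjSpectrum B) := by
  have part1 : surjSpectrum B ⊆ surjSpectrum (ucMat A B C) := by
    intro z hz hMs
    apply hz
    intro v
    obtain ⟨⟨x, y⟩, hxy⟩ := hMs (0, v)
    rw [ucMat_sub_apply] at hxy
    refine ⟨y, ?_⟩
    have h2 := congrArg Prod.snd hxy
    simpa using h2
  have part2 : surjSpectrum (ucMat A B C) ⊆ surjSpectrum A ∪ surjSpectrum B := by
    intro z hz
    by_contra hc
    simp only [mem_union, surjSpectrum, mem_setOf_eq, not_or, not_not] at hc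
    apply hz
    rintro ⟨u, v⟩
    obtain ⟨y, hy⟩ := hc.2 v
    obtain ⟨x, hx⟩ := hc.1 (u - C y)
    refine ⟨(x, y), ?_⟩
    rw [ucMat_sub_apply]
    simp only [sub_apply, smul_apply, one_apply] at hx hy
    rw [Prod.mk.injEq]
    constructor
    · rw [eq_sub_iff_add_eq, sub_add_eq_add_sub] at hx
      exact hx
    · exact hy
  have part3 : (surjSpectrum A ∪ surjSpectrum B) \ surjSpectrum (ucMat A B C) ⊆
      (surjSpectrum A ∩ apSpectrum B) \ surjSpectrum B := by
    intro z hz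
    have hznotB : z ∉ surjSpectrum B := fun h => hz.2 (part1 h)
    have hBz : Function.Surjective ⇑(B - z • (1 : Y →L[ℂ] Y)) := not_not.mp hznotB
    have hMz : Function.Surjective ⇑(ucMat A B C - z • (1 : (X × Y) →L[ℂ] (X × Y))) :=
      not_not.mp hz.2
    have hA : z ∈ surjSpectrum A := hz.1.resolve_right hznotB
    have hnotinj : ¬ Function.Injective ⇑(B - z • (1 : Y →L[ℂ] Y)) := by
      intro hinj
      apply hA
      intro u
      obtain ⟨⟨x, y⟩, hxy⟩ := hMz (u, 0)
      rw [ucMat_sub_apply] at hxy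
      have h2 : B y - z • y = 0 := congrArg Prod.snd hxy
      have hy0 : y = 0 := by
        apply hinj
        simp only [sub_apply, smul_apply, one_apply]
        simpa using h2
      have h1 : A x + C y - z • x = u := congrArg Prod.fst hxy
      refine ⟨x, ?_⟩
      simp only [sub_apply, smul_apply, one_apply]
      rw [hy0] at h1
      simpa using h1
    exact ⟨⟨hA, fun hcl => hnotinj hcl.1⟩, hznotB⟩
  refine ⟨part1, part2, part3, ?_⟩
  intro z hz
  obtain ⟨⟨hA, hap⟩, hznotB⟩ := part3 hz
  have hBz : Function.Surjective ⇑(B - z • (1 : Y →L[ℂ] Y)) := not_not.mp hznotB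
  have hclosed : IsClosed (LinearMap.range ((B - z • (1 : Y →L[ℂ] Y)) : Y →ₗ[ℂ] Y) : Set Y) := by
    have : LinearMap.range ((B - z • (1 : Y →L[ℂ] Y)) : Y →ₗ[ℂ] Y) = ⊤ := LinearMap.range_eq_top.mpr hBz
    rw [this]
    simpa using isClosed_univ
  have hnotinj : ¬ Function.Injective ⇑(B - z • (1 : Y →L[ℂ] Y)) :=
    fun hinj => hap ⟨hinj, hclosed⟩
  have hspec : z ∈ spectrum ℂ B := by
    rw [spectrum.mem_iff, Algebra.algebraMap_eq_smul_one]
    intro hu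
    have hu2 : IsUnit (B - z • (1 : Y →L[ℂ] Y)) := by
      have := hu.neg; rwa [neg_sub] at this
    exact hnotinj (ContinuousLinearMap.isUnit_iff_bijective.mp hu2).injective
  intro p m hpm
  exact myHull B hspec p m fun ζ hζ => hpm ζ (myFrontier B hζ)
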